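/- For every α, β, γ ∈ 𝔽_q (q a prime power) there exist matrices A, B, C ∈ SL₂(𝔽_q) with tr(A) = α, tr(B) = β, tr(C) = γ, and A·B·C = 1. -/

import Mathlib

open Matrix Polynomial

private lemma mb_sq_surj {F : Type} [Field F] [Fintype F] (h2 : (2 : F) = 0) (v : F) :
    ∃ q : F, q * q = v := by
  have hinj : Function.Injective (fun x : F => x * x) := by
    intro x y hxy
    simp only at hxy
    have h0 : (x - y) * (x + y) = 0 := by linear_combination hxy
    rcases mul_eq_zero.mp h0 with h | h
    · exact sub_eq_zero.mp h
    · have hx : x = -y := eq_neg_of_add_eq_zero_left h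
      rw [hx]; linear_combination -y * h2
  exact (Finite.injective_iff_surjective.mp hinj) v

private lemma mb_quad_sq {F : Type} [Field F] [Fintype F] (h2 : (2 : F) ≠ 0)
    (a b c : F) (ha : a ≠ 0) : ∃ x y : F, a * x ^ 2 + b * x + c = y ^ 2 := by
  have hchar : ringChar F ≠ 2 := by
    intro h
    apply h2
    have h0 : ((ringChar F : ℕ) : F) = 0 := ringChar.Nat.cast_ringChar
    rw [h] at h0
    exact_mod_cast h0
  have hcard : Fintype.card F % 2 = 1 := FiniteField.odd_card_of_char_ne_two hchar
  have hf2 : degree (C (1 : F) * X ^ 2 + C 0 * X + C (-c)) = 2 :=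
    degree_quadratic one_ne_zero
  have hg2 : degree (C (-a) * X ^ 2 + C (-b) * X + C (0 : F)) = 2 :=
    degree_quadratic (neg_ne_zero.mpr ha)
  obtain ⟨y, x, hxy⟩ := FiniteField.exists_root_sum_quadratic hf2 hg2 hcard
  refine ⟨x, y, ?_⟩
  simp only [eval_add, eval_mul, eval_pow, eval_C, eval_X] at hxy
  linear_combination -hxy

private lemma mb_trace_inv {F : Type} [Field F] (S : Matrix.SpecialLinearGroup (Fin 2) F) :
    Matrix.trace ((S⁻¹ : Matrix.SpecialLinearGroup (Fin 2) F) : Matrix (Fin 2) (Fin 2) F)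
      = Matrix.trace (S : Matrix (Fin 2) (Fin 2) F) := by
  rw [Matrix.SpecialLinearGroup.coe_inv, Matrix.adjugate_fin_two, Matrix.trace_fin_two,
    Matrix.trace_fin_two]
  simp [add_comm]

private lemma mb_fricke_aux {F : Type} [Field F] [Fintype F] (α β γ : F)
    (h : ∃ p q : F, q * q + (α * p - γ) * q + (1 - p * (β - p)) = 0) :
    ∃ A B : Matrix.SpecialLinearGroup (Fin 2) F,
      Matrix.trace (A : Matrix (Fin 2) (Fin 2) F) = α ∧
      Matrix.trace (B : Matrix (Fin 2) (Fin 2) F) = β ∧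
      Matrix.trace ((A * B : Matrix.SpecialLinearGroup (Fin 2) F) : Matrix (Fin 2) (Fin 2) F) = γ := by
  obtain ⟨p, q, hpq⟩ := h
  refine ⟨⟨!![α, -1; 1, 0], by simp [Matrix.det_fin_two_of]⟩,
    ⟨!![p, q; α * p + q - γ, β - p], by
      rw [Matrix.det_fin_two_of]; linear_combination -hpq⟩, ?_, ?_, ?_⟩
  · simp [Matrix.trace_fin_two_of]
  · simp [Matrix.trace_fin_two_of]
  · show Matrix.trace (!![α, -1; 1, 0] * !![p, q; α * p + q - γ, β - p]) = γ
    rw [Matrix.mul_fin_two, Matrix.trace_fin_two_of]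
    ring

private lemma mb_fricke2 {F : Type} [Field F] [Fintype F] (h2 : (2 : F) = 0)
    (α β γ : F) (hα : α ≠ 0) :
    ∃ A B : Matrix.SpecialLinearGroup (Fin 2) F,
      Matrix.trace (A : Matrix (Fin 2) (Fin 2) F) = α ∧
      Matrix.trace (B : Matrix (Fin 2) (Fin 2) F) = β ∧
      Matrix.trace ((A * B : Matrix.SpecialLinearGroup (Fin 2) F) : Matrix (Fin 2) (Fin 2) F) = γ := by
  apply mb_fricke_aux
  set p := γ * α⁻¹ with hp
  obtain ⟨q, hq⟩ := mb_sq_surj h2 (p * (β - p) - 1)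
  refine ⟨p, q, ?_⟩
  have hαp : α * p = γ := by
    rw [hp]; field_simp
  rw [hαp]
  linear_combination hq

private lemma mb_fricke {F : Type} [Field F] [Fintype F] (α β γ : F) :
    ∃ A B : Matrix.SpecialLinearGroup (Fin 2) F,
      Matrix.trace (A : Matrix (Fin 2) (Fin 2) F) = α ∧
      Matrix.trace (B : Matrix (Fin 2) (Fin 2) F) = β ∧
      Matrix.trace ((A * B : Matrix.SpecialLinearGroup (Fin 2) F) : Matrix (Fin 2) (Fin 2) F) = γ := by
  by_cases h2 : (2 : F) = 0
  · -- characteristic 2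
    by_cases hα : α ≠ 0
    · exact mb_fricke2 h2 α β γ hα
    push_neg at hα
    subst hα
    by_cases hβ : β ≠ 0
    · obtain ⟨X, Y, hX, hY, hXY⟩ := mb_fricke2 h2 β 0 γ hβ
      exact ⟨Y, X, hY, hX, by rwa [Matrix.SpecialLinearGroup.coe_mul, Matrix.trace_mul_comm,
        ← Matrix.SpecialLinearGroup.coe_mul] at hXY⟩
    push_neg at hβ
    subst hβ
    by_cases hγ : γ ≠ 0
    · obtain ⟨X, Y, hX, hY, hXY⟩ := mb_fricke2 h2 γ 0 0 hγ
      refine ⟨Y, (X * Y)⁻¹, hY, by rw [mb_trace_inv]; exact hXY, ?_⟩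
      have hY2 : Y * (X * Y)⁻¹ = X⁻¹ := by group
      rw [hY2, mb_trace_inv, hX]
    push_neg at hγ
    subst hγ
    have hne : (-1 : F) = 1 := by linear_combination -h2
    refine ⟨⟨!![0, 1; 1, 0], by rw [Matrix.det_fin_two_of]; linear_combination -h2⟩,
      ⟨!![0, 1; 1, 0], by rw [Matrix.det_fin_two_of]; linear_combination -h2⟩, ?_, ?_, ?_⟩
    · simp [Matrix.trace_fin_two_of]
    · simp [Matrix.trace_fin_two_of]
    · show Matrix.trace (!![(0:F), 1; 1, 0] * !![(0:F), 1; 1, 0]) = 0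
      rw [Matrix.mul_fin_two, Matrix.trace_fin_two_of]
      linear_combination h2
  · -- odd characteristic
    have h4 : (4 : F) ≠ 0 := by
      intro h; apply h2
      have h0 : (2 : F) * 2 = 0 := by linear_combination h
      rcases mul_eq_zero.mp h0 with h | h <;> exact h
    by_cases hα4 : α * α - 4 ≠ 0
    · obtain ⟨p, y, hpy⟩ := mb_quad_sq h2 (α * α - 4) (4 * β - 2 * α * γ) (γ * γ - 4) hα4
      apply mb_fricke_aux
      set q : F := (γ - α * p + y) / 2 with hqdef
      have hq : 2 * q = γ - α * p + y := by rw [hqdef]; field_simp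
      refine ⟨p, q, ?_⟩
      have key : 4 * (q * q + (α * p - γ) * q + (1 - p * (β - p))) = 0 := by
        linear_combination (2 * q + y + α * p - γ) * hq - hpy
      exact (mul_eq_zero.mp key).resolve_left h4
    push_neg at hα4
    by_cases hb : 4 * β - 2 * α * γ ≠ 0
    · apply mb_fricke_aux
      set p : F := (4 - γ * γ) / (4 * β - 2 * α * γ) with hpdef
      have hp : (4 * β - 2 * α * γ) * p = 4 - γ * γ := by
        rw [hpdef]; field_simp
      set q : F := (γ - α * p) / 2 with hqdef
      have hq : 2 * q = γ - α * p := by rw [hqdef]; field_simp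
      refine ⟨p, q, ?_⟩
      have key : 4 * (q * q + (α * p - γ) * q + (1 - p * (β - p))) = 0 := by
        linear_combination (2 * q + α * p - γ) * hq - p * p * hα4 - hp
      exact (mul_eq_zero.mp key).resolve_left h4
    push_neg at hb
    have hcases : α = 2 ∨ α = -2 := by
      have h0 : (α - 2) * (α + 2) = 0 := by linear_combination hα4
      rcases mul_eq_zero.mp h0 with h | h
      · exact Or.inl (sub_eq_zero.mp h)
      · exact Or.inr (eq_neg_of_add_eq_zero_left h)
    rcases hcases with hA | hA
    · -- α = 2, then β = γ
      have hβγ : β = γ := by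
        have h0 : (4 : F) * β = 4 * γ := by rw [hA] at hb; linear_combination hb
        exact mul_left_cancel₀ h4 h0
      refine ⟨1, ⟨!![0, -1; 1, β], by simp [Matrix.det_fin_two_of]⟩, ?_, ?_, ?_⟩
      · rw [hA]
        simp [Matrix.trace_one]
      · simp [Matrix.trace_fin_two_of]
      · show Matrix.trace (1 * !![(0:F), -1; 1, β]) = γ
        rw [one_mul]
        simp [Matrix.trace_fin_two_of, hβγ]
    · -- α = -2, then β = -γ
      have hβγ : β = -γ := by
        have h0 : (4 : F) * β = 4 * -γ := by rw [hA] at hb; linear_combination hb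
        exact mul_left_cancel₀ h4 h0
      refine ⟨⟨!![-1, 0; 0, -1], by simp [Matrix.det_fin_two_of]⟩,
        ⟨!![0, -1; 1, β], by simp [Matrix.det_fin_two_of]⟩, ?_, ?_, ?_⟩
      · rw [Matrix.trace_fin_two_of, hA]; ring
      · simp [Matrix.trace_fin_two_of]
      · show Matrix.trace (!![(-1:F), 0; 0, -1] * !![(0:F), -1; 1, β]) = γ
        rw [Matrix.mul_fin_two, Matrix.trace_fin_two_of, hβγ]
        ring

/-- **Macbeath's trace theorem**: for every `α, β, γ` in a finite field `F = 𝔽_q` there exist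
matrices `A, B, C ∈ SL₂(𝔽_q)` with `tr A = α`, `tr B = β`, `tr C = γ`, and `A·B·C = 1`. -/
theorem macbeath_trace (F : Type) [Field F] [Fintype F] (α β γ : F) :
    ∃ A B C : Matrix.SpecialLinearGroup (Fin 2) F,
      Matrix.trace (A : Matrix (Fin 2) (Fin 2) F) = α ∧
      Matrix.trace (B : Matrix (Fin 2) (Fin 2) F) = β ∧
      Matrix.trace (C : Matrix (Fin 2) (Fin 2) F) = γ ∧
      A * B * C = 1 := by
  obtain ⟨A, B, hA, hB, hAB⟩ := mb_fricke α β γ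
  refine ⟨A, B, (A * B)⁻¹, hA, hB, ?_, ?_⟩
  · rw [mb_trace_inv]; exact hAB
  · group
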